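/- Consider the chores-only lexicographic instance with two agents N = {1,2} and three chores M = {o1,o2,o3}, with importance orders o1 ⊳_1 o2 ⊳_1 o3 and o1 ⊳_2 o3 ⊳_2 o2. Then no complete allocation of M is both MMS and rank-maximal. Hence an MMS and rank-maximal allocation of chores can fail to exist under lexicographic preferences. -/

import Mathlib

attribute [local instance 10] Classical.propDecidable

/-- A lexicographic mixed instance: each agent `i` has a set `G i` of goods
(its complement being the chores `C i`) and a strict linear importance order
`⊳_i` on the items, encoded as a linear order where larger means more important. -/
structure LexInstance (N M : Type) [Fintype N] [Fintype M] [DecidableEq M] where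
  G : N → Finset M
  ord : N → LinearOrder M

namespace LexInstance

variable {N M : Type} [Fintype N] [Fintype M] [DecidableEq M]

/-- `inst.imp i a b` means `a ⊳_i b` : `a` is more important than `b` for agent `i`. -/
def imp (inst : LexInstance N M) (i : N) (a b : M) : Prop := (inst.ord i).lt b a

/-- The chores of agent `i`. -/
def C (inst : LexInstance N M) (i : N) : Finset M := (inst.G i)ᶜ

/-- Strict lexicographic preference `X ≻_i Y`. -/
def SPref (inst : LexInstance N M) (i : N) (X Y : Finset M) : Prop :=
  (∃ g ∈ inst.G i ∩ (X \ Y), ∀ o ∈ Y ∩ inst.G i, inst.imp i o g → o ∈ X) ∨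
  (∃ c ∈ inst.C i ∩ (Y \ X), ∀ o ∈ X ∩ inst.C i, inst.imp i o c → o ∈ Y)

/-- Weak lexicographic preference `X ⪰_i Y`. -/
def WPref (inst : LexInstance N M) (i : N) (X Y : Finset M) : Prop :=
  inst.SPref i X Y ∨ X = Y

/-- A (complete) allocation: pairwise disjoint bundles whose union is all of `M`. -/
def IsAllocation (_inst : LexInstance N M) (A : N → Finset M) : Prop :=
  (∀ i j, i ≠ j → Disjoint (A i) (A j)) ∧ ∀ o : M, ∃ i, o ∈ A i

/-- Pareto optimality of a (complete) allocation. -/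
def ParetoOptimal (inst : LexInstance N M) (A : N → Finset M) : Prop :=
  ¬ ∃ B : N → Finset M, inst.IsAllocation B ∧
      (∀ i, inst.WPref i (B i) (A i)) ∧ ∃ h, inst.SPref h (B h) (A h)

/-- The item agent `i` picks from the remaining set `R`: its `⊳_i`-greatest
remaining good if there is one, and otherwise the `⊳_i`-least remaining item. -/
noncomputable def pickOne (inst : LexInstance N M) (i : N) (R : Finset M)
    (h : R.Nonempty) : M :=
  if hg : (R ∩ inst.G i).Nonempty then @Finset.max' M (inst.ord i) (R ∩ inst.G i) hg
  else @Finset.min' M (inst.ord i) R h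

/-- Run the picking procedure along a sequence of agents, starting from the
remaining items `R`; returns the resulting bundles. -/
noncomputable def runPick (inst : LexInstance N M) : List N → Finset M → N → Finset M
  | [], _ => fun _ => ∅
  | i :: rest, R =>
    if h : R.Nonempty then
      fun j =>
        runPick inst rest (R.erase (inst.pickOne i R h)) j ∪
          (if j = i then {inst.pickOne i R h} else ∅)
    else fun _ => ∅

/-- An allocation is sequencible if it is produced by some picking sequence of
length `|M|` starting from all items. -/
def Sequencible (inst : LexInstance N M) (A : N → Finset M) : Prop :=
  ∃ s : List N, s.length = Fintype.card M ∧ inst.runPick s Finset.univ = A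

/-- A chores-only instance: every item is a chore for every agent. -/
def ChoresOnly (inst : LexInstance N M) : Prop := ∀ i, inst.G i = ∅

/-- Envy-freeness up to any item. -/
def EFX (inst : LexInstance N M) (A : N → Finset M) : Prop :=
  ∀ i h : N,
    (∀ o ∈ A h ∩ inst.G i, inst.WPref i (A i) ((A h).erase o)) ∧
    (∀ o ∈ A i ∩ inst.C i, inst.WPref i ((A i).erase o) (A h))

/-- Envy-freeness up to any chore. -/
def EFXc (inst : LexInstance N M) (A : N → Finset M) : Prop :=
  ∀ i h : N, ∀ o ∈ A i ∩ inst.C i, inst.WPref i ((A i).erase o) (A h)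

/-- Envy-freeness up to one item. -/
def EF1 (inst : LexInstance N M) (A : N → Finset M) : Prop :=
  ∀ i h : N, ((A i ∩ inst.C i) ∪ (A h ∩ inst.G i)).Nonempty →
    ∃ o ∈ (A i ∩ inst.C i) ∪ (A h ∩ inst.G i),
      inst.WPref i (A i) ((A h).erase o) ∨ inst.WPref i ((A i).erase o) (A h)

/-- `A` gives every agent at least its maximin share: for every partition `P`
of the items into `n` bundles, agent `i` weakly prefers `A i` to some bundle of
`P` (hence to the `⪰_i`-least bundle of `P`). -/
def MMSfair (inst : LexInstance N M) (A : N → Finset M) : Prop :=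
  ∀ i, ∀ P : N → Finset M, inst.IsAllocation P → ∃ j, inst.WPref i (A i) (P j)

/-- `B` is the maximin share `MMS_i` of agent `i`: `B` is the `⪰_i`-least bundle
of some partition of `M` into `n` bundles, and every such partition contains a
bundle to which `B` is weakly preferred. -/
def IsMMSBundle (inst : LexInstance N M) (i : N) (B : Finset M) : Prop :=
  (∃ P : N → Finset M, inst.IsAllocation P ∧ (∃ j, P j = B) ∧
      ∀ j, inst.WPref i (P j) B) ∧
  (∀ P : N → Finset M, inst.IsAllocation P → ∃ j, inst.WPref i B (P j))

/-- The `k`-th (0-indexed) `⊳_i`-greatest good of agent `i`, if any. -/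
noncomputable def kthGood (inst : LexInstance N M) (i : N) (k : ℕ) : Option M :=
  letI : LinearOrder M := inst.ord i
  (((inst.G i).sort (· ≤ ·)).reverse)[k]?

/-- The `k`-th (0-indexed) `⊳_i`-least chore of agent `i`, if any. -/
noncomputable def kthChore (inst : LexInstance N M) (i : N) (k : ℕ) : Option M :=
  letI : LinearOrder M := inst.ord i
  ((inst.C i).sort  (· ≤ ·))[k]?

/-- Number of agents receiving their `k`-th (0-indexed) greatest good. -/
noncomputable def nPlus (inst : LexInstance N M) (A : N → Finset M) (k : ℕ) : ℕ :=
  (Finset.univ.filter fun i => (inst.kthGood i k).elim False (· ∈ A i)).card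

/-- Number of agents receiving their `k`-th (0-indexed) least chore. -/
noncomputable def nMinus (inst : LexInstance N M) (A : N → Finset M) (k : ℕ) : ℕ :=
  (Finset.univ.filter fun i => (inst.kthChore i k).elim False (· ∈ A i)).card

/-- The rank signature `(n_1^+, …, n_m^+, n_1^-, …, n_m^-)` of an allocation. -/
noncomputable def signature (inst : LexInstance N M) (A : N → Finset M) : List ℕ :=
  ((List.range (Fintype.card M)).map fun k => inst.nPlus A k) ++
    ((List.range (Fintype.card M)).map fun k => inst.nMinus A k)

/-- Rank-maximality: the signature is lexicographically maximal over allocations. -/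
def RankMaximal (inst : LexInstance N M) (A : N → Finset M) : Prop :=
  inst.IsAllocation A ∧ ∀ B : N → Finset M, inst.IsAllocation B →
    ¬ List.Lex (· < ·) (inst.signature A) (inst.signature B)

end LexInstance

/-- The set of the `k` greatest (most important) elements of `S` under `L`. -/
def topK {M : Type} [DecidableEq M] (L : LinearOrder M) (S : Finset M) (k : ℕ) :
    Finset M :=
  letI := L
  S.filter fun o => (S.filter fun o' => o < o').card < k

/-- Build a linear order on `Fin m` from an injective ranking function
(larger value = more important). -/
def mkOrd {m : ℕ} (f : Fin m → ℕ) (hf : Function.Injective f) : LinearOrder (Fin m) :=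
  LinearOrder.lift' f hf

/-- The chores-only instance with two agents and three chores `0,1,2` standing
for `o1,o2,o3`, with importance orders `o1 ⊳₁ o2 ⊳₁ o3` and `o1 ⊳₂ o3 ⊳₂ o2`. -/
def inst16 : LexInstance (Fin 2) (Fin 3) where
  G := fun _ => ∅
  ord := ![mkOrd ![2, 1, 0] (by decide), mkOrd ![2, 0, 1] (by decide)]

instance decImp (i : Fin 2) (a b : Fin 3) : Decidable (inst16.imp i a b) :=
  (inst16.ord i).toDecidableLT b a

instance decSPref (i : Fin 2) (X Y : Finset (Fin 3)) : Decidable (inst16.SPref i X Y) := by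
  unfold LexInstance.SPref; infer_instance

instance decWPref (i : Fin 2) (X Y : Finset (Fin 3)) : Decidable (inst16.WPref i X Y) := by
  unfold LexInstance.WPref; infer_instance

example : inst16.WPref 0 ({1,2} : Finset (Fin 3)) {0} := by decide
example : ¬ inst16.WPref 0 ({0,1} : Finset (Fin 3)) {0} := by decide
example : inst16.C 0 = insert 2 (insert 1 {0}) := by decide
example : ∀ S : Finset (Fin 3), S = ∅ ∨ S = {0} ∨ S = {1} ∨ S = {2} ∨ S = {0,1} ∨ S = {0,2} ∨ S = {1,2} ∨ S = {0,1,2} := by decide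
example : inst16.IsAllocation ![{0},{1,2}] := by constructor <;> decide

lemma hk0 : inst16.kthChore 0 0 = some 2 := by
  unfold LexInstance.kthChore
  rw [show inst16.C 0 = insert 2 (insert 1 {0}) from by decide,
    Finset.sort_insert, Finset.sort_insert, Finset.sort_singleton]
  · rfl
  · intro b hb; fin_cases hb
    · show (1:ℕ) ≤ 2; decide
  · decide
  · intro b hb; fin_cases hb
    · show (0:ℕ) ≤ 1; decide
    · show (0:ℕ) ≤ 2; decide
  · decide

lemma hk1 : inst16.kthChore 1 0 = some 1 := by
  unfold LexInstance.kthChore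
  rw [show inst16.C 1 = insert 1 (insert 2 {0}) from by decide,
    Finset.sort_insert, Finset.sort_insert, Finset.sort_singleton]
  · rfl
  · intro b hb; fin_cases hb
    · show (1:ℕ) ≤ 2; decide
  · decide
  · intro b hb; fin_cases hb
    · show (0:ℕ) ≤ 1; decide
    · show (0:ℕ) ≤ 2; decide
  · decide

lemma hkG (i : Fin 2) (k : ℕ) : inst16.kthGood i k = none := by
  unfold LexInstance.kthGood
  rw [show inst16.G i = ∅ from rfl, Finset.sort_empty]
  rfl

lemma hnPlus (A : Fin 2 → Finset (Fin 3)) (k : ℕ) : inst16.nPlus A k = 0 := by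
  unfold LexInstance.nPlus
  rw [Finset.card_eq_zero, Finset.filter_eq_empty_iff]
  intro i _
  rw [hkG]
  exact not_false

lemma hnMinus (A : Fin 2 → Finset (Fin 3)) :
    inst16.nMinus A 0 = (if (2:Fin 3) ∈ A 0 then 1 else 0) + (if (1:Fin 3) ∈ A 1 then 1 else 0) := by
  unfold LexInstance.nMinus
  rw [Finset.card_filter, Fin.sum_univ_two, hk0, hk1]
  simp only [Option.elim]
  congr

lemma hsig (A : Fin 2 → Finset (Fin 3)) : inst16.signature A =
    [inst16.nPlus A 0, inst16.nPlus A 1, inst16.nPlus A 2,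
     inst16.nMinus A 0, inst16.nMinus A 1, inst16.nMinus A 2] := by
  rfl

/-- no complete allocation of this chores-only instance is both
MMS and rank-maximal. -/
theorem no_mms_rm_allocation :
    ∀ A : Fin 2 → Finset (Fin 3), inst16.IsAllocation A →
      ¬ (inst16.MMSfair A ∧ inst16.RankMaximal A) := by
  intro A hA
  rintro ⟨hM, hRM⟩
  have hcomp : A 1 = (A 0)ᶜ := by
    obtain ⟨hd, hc⟩ := hA
    ext o
    simp only [Finset.mem_compl]
    constructor
    · intro h1 h0
      exact Finset.disjoint_left.1 (hd 0 1 (by decide)) h0 h1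
    · intro h0
      obtain ⟨i, hi⟩ := hc o
      fin_cases i
      · exact absurd hi h0
      · exact hi
  have hP : inst16.IsAllocation ![{0},{1,2}] := by constructor <;> decide
  have hB : inst16.IsAllocation ![{0,2},{1}] := by constructor <;> decide
  have key : ∀ S : Finset (Fin 3), S = ∅ ∨ S = {0} ∨ S = {1} ∨ S = {2} ∨
      S = {0,1} ∨ S = {0,2} ∨ S = {1,2} ∨ S = {0,1,2} := by decide
  have hRMc : ∀ h : A 0 = ({0} : Finset (Fin 3)) ∨ A 0 = ({1,2} : Finset (Fin 3)), False := by
    intro h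
    have hsB : inst16.nMinus ![{0,2},{1}] 0 = 2 := by
      rw [hnMinus]; decide
    have hsA : inst16.nMinus A 0 = 1 := by
      rcases h with h | h <;> rw [hnMinus, hcomp, h] <;> decide
    refine hRM.2 ![{0,2},{1}] hB ?_
    rw [hsig, hsig, hsA, hsB]
    simp only [hnPlus]
    exact .cons (.cons (.cons (.rel one_lt_two)))
  rcases key (A 0) with h | h | h | h | h | h | h | h
  · obtain ⟨j, hj⟩ := hM 1 ![{0},{1,2}] hP
    rw [hcomp, h] at hj
    fin_cases j <;> revert hj <;> decide
  · exact hRMc (Or.inl h)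
  · obtain ⟨j, hj⟩ := hM 1 ![{0},{1,2}] hP
    rw [hcomp, h] at hj
    fin_cases j <;> revert hj <;> decide
  · obtain ⟨j, hj⟩ := hM 1 ![{0},{1,2}] hP
    rw [hcomp, h] at hj
    fin_cases j <;> revert hj <;> decide
  · obtain ⟨j, hj⟩ := hM 0 ![{0},{1,2}] hP
    rw [h] at hj
    fin_cases j <;> revert hj <;> decide
  · obtain ⟨j, hj⟩ := hM 0 ![{0},{1,2}] hP
    rw [h] at hj
    fin_cases j <;> revert hj <;> decide
  · exact hRMc (Or.inr h)
  · obtain ⟨j, hj⟩ := hM 0 ![{0},{1,2}] hP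
    rw [h] at hj
    fin_cases j <;> revert hj <;> decide
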